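/- arXiv:1308.0933 — 3 statements merged into one kernel-verified Lean document; each statement's English description precedes it below -/
import Mathlib

section
/- Let η > 0 and let (K_s) be positive integers with K_s/√s → η. For each positive integer s let π^{(s)} be the stationary distribution of the M/M/s/K_s queue with ρ = 1. Then √s · π^{(s)}_s → 1/(√(π/2) + η) as s → ∞. -/
open Filter Real MeasureTheory Set

/-- Unnormalized stationary weights of the M/M/s/K queue with traffic intensity ρ. -/
noncomputable def statw (s : ℕ) (ρ : ℝ) (i : ℕ) : ℝ :=
  if i ≤ s then (s * ρ) ^ i / (Nat.factorial i) else ρ ^ (i - s) * (s * ρ) ^ s / (Nat.factorial s)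

/-- Stationary distribution of the M/M/s/K queue on `{0,…,s+K}`. -/
noncomputable def statPi (s K : ℕ) (ρ : ℝ) (i : ℕ) : ℝ :=
  statw s ρ i / ∑ j ∈ Finset.range (s + K + 1), statw s ρ j



lemma log_upper {x : ℝ} (hx1 : -1 < x) (hx0 : x ≤ 0) : Real.log (1 + x) ≤ x - x^2/2 := by
  set F : ℝ → ℝ := fun y => y - y^2/2 - Real.log (1+y) with hF
  have key : AntitoneOn F (Ioi (-1)) := by
    have hd : ∀ y ∈ Ioi (-1:ℝ), HasDerivAt F (1 - y - 1/(1+y)) y := by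
      intro y hy
      have hy1 : (0:ℝ) < 1 + y := by linarith [mem_Ioi.mp hy]
      have h1 : HasDerivAt (fun z : ℝ => Real.log (1+z)) (1/(1+y)) y := by
        simpa using ((hasDerivAt_id y).const_add 1).log hy1.ne'
      have h2 : HasDerivAt (fun z : ℝ => z - z^2/2) (1 - y) y := by
        have := (hasDerivAt_id y).fun_sub ((hasDerivAt_pow 2 y).div_const 2)
        simpa [mul_comm] using this
      simpa using h2.fun_sub h1
    refine antitoneOn_of_deriv_nonpos (convex_Ioi _) ?_ ?_ ?_
    · exact fun y hy => (hd y hy).continuousAt.continuousWithinAt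
    · intro y hy
      rw [interior_Ioi] at hy
      exact (hd y hy).differentiableAt.differentiableWithinAt
    · intro y hy
      rw [interior_Ioi] at hy
      have hy1 : (0:ℝ) < 1 + y := by linarith [mem_Ioi.mp hy]
      rw [(hd y hy).deriv]
      rw [sub_nonpos, ← sub_nonneg]
      have : 1/(1+y) - (1 - y) = y^2/(1+y) := by field_simp; ring
      rw [this]
      positivity
  have h0 : F 0 ≤ F x := key hx1 (by norm_num) hx0
  simp only [hF] at h0
  norm_num at h0
  linarith

lemma log_lower {x : ℝ} (hx1 : -1 < x) (hx0 : x ≤ 0) :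
    x - x^2/(2*(1+x)) ≤ Real.log (1 + x) := by
  set F : ℝ → ℝ := fun y => Real.log (1+y) - y + y^2/(2*(1+y)) with hF
  have key : AntitoneOn F (Ioi (-1)) := by
    have hd : ∀ y ∈ Ioi (-1:ℝ), HasDerivAt F
        (1/(1+y) - 1 + (2*y*(2*(1+y)) - y^2*2)/(2*(1+y))^2) y := by
      intro y hy
      have hy1 : (0:ℝ) < 1 + y := by linarith [mem_Ioi.mp hy]
      have h1 : HasDerivAt (fun z : ℝ => Real.log (1+z)) (1/(1+y)) y := by
        simpa using ((hasDerivAt_id y).const_add 1).log hy1.ne'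
      have h2 : HasDerivAt (fun z : ℝ => z^2/(2*(1+z)))
          ((2*y*(2*(1+y)) - y^2*2)/(2*(1+y))^2) y := by
        have hnum : HasDerivAt (fun z : ℝ => z^2) (2*y) y := by
          simpa using hasDerivAt_pow 2 y
        have hden : HasDerivAt (fun z : ℝ => 2*(1+z)) 2 y := by
          simpa using ((hasDerivAt_id y).const_add 1).const_mul 2
        exact hnum.div hden (by positivity)
      simpa using (h1.fun_sub (hasDerivAt_id y)).fun_add h2
    refine antitoneOn_of_deriv_nonpos (convex_Ioi _) ?_ ?_ ?_
    · exact fun y hy => (hd y hy).continuousAt.continuousWithinAt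
    · intro y hy
      rw [interior_Ioi] at hy
      exact (hd y hy).differentiableAt.differentiableWithinAt
    · intro y hy
      rw [interior_Ioi] at hy
      have hy1 : (0:ℝ) < 1 + y := by linarith [mem_Ioi.mp hy]
      rw [(hd y hy).deriv]
      have : 1/(1+y) - 1 + (2*y*(2*(1+y)) - y^2*2)/(2*(1+y))^2 = -(y^2)/(2*(1+y)^2) := by
        field_simp; ring
      rw [this]
      have : (0:ℝ) < 2*(1+y)^2 := by positivity
      exact div_nonpos_of_nonpos_of_nonneg (neg_nonpos.mpr (sq_nonneg y)) this.le
  have h0 : F 0 ≤ F x := key hx1 (by norm_num) hx0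
  simp only [hF] at h0
  norm_num at h0
  linarith



lemma sum_exp_hasDerivAt (n : ℕ) (t : ℝ) :
    HasDerivAt (fun y : ℝ => Real.exp (-y) * ∑ i ∈ Finset.range (n+1), y^i / (Nat.factorial i))
      (-(Real.exp (-t) * t^n / (Nat.factorial n))) t := by
  have hP : HasDerivAt (fun y : ℝ => ∑ i ∈ Finset.range (n+1), y^i / (Nat.factorial i))
      (∑ i ∈ Finset.range n, t^i / (Nat.factorial i)) t := by
    have h1 : HasDerivAt (fun y : ℝ => ∑ i ∈ Finset.range (n+1), y^i / (Nat.factorial i))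
        (∑ i ∈ Finset.range (n+1), (i : ℝ) * t^(i-1) / (Nat.factorial i)) t := by
      apply HasDerivAt.fun_sum
      intro i _
      simpa using (hasDerivAt_pow i t).div_const (Nat.factorial i : ℝ)
    convert h1 using 1
    rw [Finset.sum_range_succ']
    simp only [Nat.cast_zero, zero_mul, zero_div, add_zero]
    apply Finset.sum_congr rfl
    intro i _
    rw [Nat.factorial_succ, Nat.add_sub_cancel]
    push_cast
    have : (i:ℝ) + 1 ≠ 0 := by positivity
    field_simp
  have he : HasDerivAt (fun y : ℝ => Real.exp (-y)) (-Real.exp (-t)) t := by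
    simpa using (hasDerivAt_neg t).exp
  have := he.fun_mul hP
  refine HasDerivAt.congr_deriv this ?_
  have hfac : (Nat.factorial n : ℝ) ≠ 0 := Nat.cast_ne_zero.mpr (Nat.factorial_ne_zero n)
  have hsum : ∑ i ∈ Finset.range (n+1), t^i / (Nat.factorial i)
      = (∑ i ∈ Finset.range n, t^i / (Nat.factorial i)) + t^n / (Nat.factorial n) :=
    Finset.sum_range_succ _ n
  rw [hsum]
  ring

lemma incomplete_gamma_identity (n : ℕ) (x : ℝ) :
    ∫ t in (0:ℝ)..x, t^n * Real.exp (-t) =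
      (Nat.factorial n : ℝ) *
        (1 - Real.exp (-x) * ∑ i ∈ Finset.range (n+1), x^i / (Nat.factorial i)) := by
  have hfac : (Nat.factorial n : ℝ) ≠ 0 := Nat.cast_ne_zero.mpr (Nat.factorial_ne_zero n)
  have key := intervalIntegral.integral_eq_sub_of_hasDerivAt
    (f := fun y => -((Nat.factorial n : ℝ) *
      (Real.exp (-y) * ∑ i ∈ Finset.range (n+1), y^i / (Nat.factorial i))))
    (f' := fun t => t^n * Real.exp (-t)) (a := 0) (b := x)
    (fun t _ => by
      have := ((sum_exp_hasDerivAt n t).const_mul (Nat.factorial n : ℝ)).fun_neg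
      convert this using 1
      field_simp)
    (by
      apply Continuous.intervalIntegrable
      continuity)
  rw [key]
  have h0 : ∑ i ∈ Finset.range (n+1), (0:ℝ)^i / (Nat.factorial i) = 1 := by
    rw [Finset.sum_eq_single 0]
    · simp
    · intro i _ hi
      rw [zero_pow hi, zero_div]
    · simp
  simp only [neg_zero, Real.exp_zero, h0, mul_one]
  ring



noncomputable def gfun (n : ℕ) (u : ℝ) : ℝ :=
  (1 + u / Real.sqrt n)^n * Real.exp (-(Real.sqrt n * u))

noncomputable def hfun (n : ℕ) : ℝ → ℝ := Set.indicator (Ioc (-Real.sqrt n) 0) (gfun n)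

lemma sqrt_nat_tendsto : Tendsto (fun n : ℕ => Real.sqrt n) atTop atTop := by
  have h1 : Tendsto (fun x : ℝ => x ^ ((1:ℝ)/2)) atTop atTop :=
    tendsto_rpow_atTop (by norm_num)
  have h2 : Tendsto (fun n : ℕ => ((n:ℝ) ^ ((1:ℝ)/2))) atTop atTop :=
    h1.comp tendsto_natCast_atTop_atTop
  refine h2.congr' ?_
  filter_upwards [eventually_ge_atTop 0] with n _
  rw [Real.sqrt_eq_rpow]

-- g n u = exp (n * log (1 + u/√n) - √n * u) when -√n < u
lemma gfun_eq_exp {n : ℕ} {u : ℝ} (hn : 0 < n) (hu : -Real.sqrt n < u) :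
    gfun n u = Real.exp (n * Real.log (1 + u / Real.sqrt n) - Real.sqrt n * u) := by
  have hs : (0:ℝ) < Real.sqrt n := Real.sqrt_pos.mpr (by exact_mod_cast hn)
  have hx : (0:ℝ) < 1 + u / Real.sqrt n := by
    have : -1 < u / Real.sqrt n := by
      rw [neg_lt, ← neg_div, div_lt_one hs]; linarith
    linarith
  rw [gfun, Real.exp_sub, ← Real.log_pow, Real.exp_log (by positivity)]
  rw [Real.exp_neg]
  ring

lemma gfun_le {n : ℕ} {u : ℝ} (hu1 : -Real.sqrt n < u) (hu0 : u ≤ 0) (hn : 0 < n) :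
    gfun n u ≤ Real.exp (-(u^2/2)) := by
  have hs : (0:ℝ) < Real.sqrt n := Real.sqrt_pos.mpr (by exact_mod_cast hn)
  have hss : Real.sqrt n * Real.sqrt n = n := Real.mul_self_sqrt (Nat.cast_nonneg n)
  set x := u / Real.sqrt n with hxdef
  have hx1 : -1 < x := by
    rw [hxdef, neg_lt, ← neg_div, div_lt_one hs]
    linarith
  have hx0 : x ≤ 0 := div_nonpos_of_nonpos_of_nonneg hu0 hs.le
  have hlog := log_upper hx1 hx0
  have hn0 : ((n:ℝ)) ≠ 0 := by positivity
  have hnx : (n:ℝ) * x = Real.sqrt n * u := by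
    rw [hxdef]
    calc (n:ℝ) * (u / Real.sqrt n) = ((n:ℝ) / Real.sqrt n) * u := by ring
    _ = Real.sqrt n * u := by rw [Real.div_sqrt]
  have hnx2 : (n:ℝ) * x^2 = u^2 := by
    have hxx : x^2 = u^2 / n := by
      rw [hxdef, div_pow, Real.sq_sqrt (Nat.cast_nonneg n)]
    rw [hxx]; field_simp
  rw [gfun_eq_exp hn hu1, Real.exp_le_exp]
  have : (n:ℝ) * Real.log (1+x) ≤ n * x - n * x^2/2 := by
    have hn' : (0:ℝ) ≤ n := Nat.cast_nonneg n
    nlinarith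
  rw [hnx, hnx2] at this
  linarith

lemma gfun_tendsto {u : ℝ} (hu0 : u ≤ 0) :
    Tendsto (fun n : ℕ => gfun n u) atTop (nhds (Real.exp (-(u^2/2)))) := by
  have hx : Tendsto (fun n : ℕ => u / Real.sqrt n) atTop (nhds 0) := by
    simpa [div_eq_mul_inv] using
      (sqrt_nat_tendsto.inv_tendsto_atTop).const_mul u
  -- exponent squeeze
  have hev : ∀ᶠ n : ℕ in atTop, 0 < n ∧ -Real.sqrt n < u := by
    rcases eq_or_lt_of_le hu0 with rfl | hu
    · filter_upwards [eventually_ge_atTop 1] with n hn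
      exact ⟨hn, neg_lt_zero.mpr (Real.sqrt_pos.mpr (by exact_mod_cast hn))⟩
    · have : ∀ᶠ n : ℕ in atTop, -u < Real.sqrt n := sqrt_nat_tendsto.eventually_gt_atTop (-u)
      filter_upwards [this, eventually_ge_atTop 1] with n h1 h2
      exact ⟨h2, by linarith⟩
  have hlow : Tendsto (fun n : ℕ => -(u^2 / (2 * (1 + u / Real.sqrt n)))) atTop
      (nhds (-(u^2/2))) := by
    have h1 : Tendsto (fun n : ℕ => 2 * (1 + u / Real.sqrt n)) atTop (nhds 2) := by
      have := hx.const_add (1:ℝ)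
      have := this.const_mul (2:ℝ)
      simpa using this
    have h2 : Tendsto (fun n : ℕ => u^2 / (2 * (1 + u / Real.sqrt n))) atTop (nhds (u^2/2)) :=
      tendsto_const_nhds.div h1 (by norm_num)
    exact h2.neg
  have hexp : Tendsto (fun n : ℕ => (n:ℝ) * Real.log (1 + u / Real.sqrt n) - Real.sqrt n * u)
      atTop (nhds (-(u^2/2))) := by
    apply tendsto_of_tendsto_of_tendsto_of_le_of_le' hlow tendsto_const_nhds
    · -- lower bound
      filter_upwards [hev] with n ⟨hn, hu1⟩
      have hs : (0:ℝ) < Real.sqrt n := Real.sqrt_pos.mpr (by exact_mod_cast hn)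
      set x := u / Real.sqrt n with hxdef
      have hx1 : -1 < x := by
        rw [hxdef, neg_lt, ← neg_div, div_lt_one hs]; linarith
      have hx0 : x ≤ 0 := div_nonpos_of_nonpos_of_nonneg hu0 hs.le
      have hlog := log_lower hx1 hx0
      have hss : Real.sqrt n * Real.sqrt n = n := Real.mul_self_sqrt (Nat.cast_nonneg n)
      have hn0 : ((n:ℝ)) ≠ 0 := by positivity
      have hnx : (n:ℝ) * x = Real.sqrt n * u := by
        rw [hxdef]
        calc (n:ℝ) * (u / Real.sqrt n) = ((n:ℝ) / Real.sqrt n) * u := by ring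
        _ = Real.sqrt n * u := by rw [Real.div_sqrt]
      have hnx2 : (n:ℝ) * x^2 = u^2 := by
        have hxx : x^2 = u^2 / n := by
          rw [hxdef, div_pow, Real.sq_sqrt (Nat.cast_nonneg n)]
        rw [hxx]; field_simp
      have hden : (0:ℝ) < 1 + x := by linarith
      have key : (n:ℝ) * (x - x^2/(2*(1+x))) ≤ n * Real.log (1+x) := by
        have hn' : (0:ℝ) ≤ n := Nat.cast_nonneg n
        exact mul_le_mul_of_nonneg_left hlog hn'
      have expand : (n:ℝ) * (x - x^2/(2*(1+x))) = n*x - (n*x^2)/(2*(1+x)) := by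
        field_simp
      rw [expand, hnx, hnx2] at key
      linarith
    · -- upper bound
      filter_upwards [hev] with n ⟨hn, hu1⟩
      have hs : (0:ℝ) < Real.sqrt n := Real.sqrt_pos.mpr (by exact_mod_cast hn)
      set x := u / Real.sqrt n with hxdef
      have hx1 : -1 < x := by
        rw [hxdef, neg_lt, ← neg_div, div_lt_one hs]; linarith
      have hx0 : x ≤ 0 := div_nonpos_of_nonpos_of_nonneg hu0 hs.le
      have hlog := log_upper hx1 hx0
      have hss : Real.sqrt n * Real.sqrt n = n := Real.mul_self_sqrt (Nat.cast_nonneg n)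
      have hn0 : ((n:ℝ)) ≠ 0 := by positivity
      have hnx : (n:ℝ) * x = Real.sqrt n * u := by
        rw [hxdef]
        calc (n:ℝ) * (u / Real.sqrt n) = ((n:ℝ) / Real.sqrt n) * u := by ring
        _ = Real.sqrt n * u := by rw [Real.div_sqrt]
      have hnx2 : (n:ℝ) * x^2 = u^2 := by
        have hxx : x^2 = u^2 / n := by
          rw [hxdef, div_pow, Real.sq_sqrt (Nat.cast_nonneg n)]
        rw [hxx]; field_simp
      have key : (n:ℝ) * Real.log (1+x) ≤ n*x - n*x^2/2 := by
        have hn' : (0:ℝ) ≤ n := Nat.cast_nonneg n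
        nlinarith
      rw [hnx] at key
      rw [hnx2] at key
      linarith
  have := (Real.continuous_exp.tendsto _).comp hexp
  refine this.congr' ?_
  filter_upwards [hev] with n ⟨hn, hu1⟩
  exact (gfun_eq_exp hn hu1).symm

lemma hfun_tendsto (u : ℝ) :
    Tendsto (fun n : ℕ => hfun n u) atTop
      (nhds (Set.indicator (Iic 0) (fun u => Real.exp (-(u^2/2))) u)) := by
  rcases le_or_gt u 0 with hu | hu
  · rw [Set.indicator_of_mem (mem_Iic.mpr hu)]
    refine (gfun_tendsto hu).congr' ?_
    have hev : ∀ᶠ n : ℕ in atTop, -Real.sqrt n < u := by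
      rcases eq_or_lt_of_le hu with rfl | hu'
      · filter_upwards [eventually_ge_atTop 1] with n hn
        exact neg_lt_zero.mpr (Real.sqrt_pos.mpr (by exact_mod_cast hn))
      · filter_upwards [sqrt_nat_tendsto.eventually_gt_atTop (-u)] with n h1
        linarith
    filter_upwards [hev] with n h1
    exact (Set.indicator_of_mem (mem_Ioc.mpr ⟨h1, hu⟩) _).symm
  · rw [Set.indicator_of_notMem (by simpa using hu.not_ge)]
    refine tendsto_const_nhds.congr' ?_
    filter_upwards with n
    exact (Set.indicator_of_notMem (fun h => (mem_Ioc.mp h).2.not_gt hu) _).symm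

lemma integral_G : ∫ u in Iic (0:ℝ), Real.exp (-(u^2/2)) = Real.sqrt (π/2) := by
  have h1 : ∫ u in Iic (0:ℝ), Real.exp (-(u^2/2))
      = ∫ u in Ioi (0:ℝ), Real.exp (-(u^2/2)) := by
    rw [show Iic (0:ℝ) = Iic (-0) by norm_num, ← integral_comp_neg_Ioi]
    apply setIntegral_congr_fun measurableSet_Ioi
    intro x _
    norm_num
  rw [h1]
  have h2 : ∀ u : ℝ, Real.exp (-(u^2/2)) = Real.exp (-(1/2) * u^2) := by
    intro u; ring_nf
  simp_rw [h2]
  rw [integral_gaussian_Ioi]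
  rw [show π / (1/2) = (π/2) * 2^2 by ring]
  rw [Real.sqrt_mul (by positivity), Real.sqrt_sq (by norm_num)]
  ring

lemma tendsto_integral_hfun :
    Tendsto (fun n : ℕ => ∫ u, hfun n u) atTop (nhds (Real.sqrt (π/2))) := by
  have key := MeasureTheory.tendsto_integral_of_dominated_convergence
    (μ := volume) (F := hfun)
    (f := Set.indicator (Iic 0) (fun u => Real.exp (-(u^2/2))))
    (bound := fun u => Real.exp (-(u^2/2)))
    (fun n => by
      apply AEStronglyMeasurable.indicator _ measurableSet_Ioc
      apply Continuous.aestronglyMeasurable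
      unfold gfun
      continuity)
    (by
      have := integrable_exp_neg_mul_sq (b := (1:ℝ)/2) (by norm_num)
      refine this.congr' ?_ ?_
      · exact this.aestronglyMeasurable.congr (by
          filter_upwards with x
          ring_nf)
      · filter_upwards with x
        ring_nf)
    (fun n => by
      filter_upwards with u
      rw [Real.norm_eq_abs]
      rcases eq_or_lt_of_le (Nat.zero_le n) with hn | hn
      · simp only [hfun, ← hn]
        norm_num
        positivity
      by_cases hu : u ∈ Ioc (-Real.sqrt n) 0
      · rw [hfun, Set.indicator_of_mem hu]
        have h1 := gfun_le hu.1 hu.2 hn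
        have h2 : 0 ≤ gfun n u := by
          have hs : (0:ℝ) < Real.sqrt n := Real.sqrt_pos.mpr (by exact_mod_cast hn)
          have hx : (0:ℝ) < 1 + u / Real.sqrt n := by
            have : -1 < u / Real.sqrt n := by
              rw [neg_lt, ← neg_div, div_lt_one hs]; linarith [hu.1]
            linarith
          unfold gfun; positivity
        rw [abs_of_nonneg h2]; exact h1
      · rw [hfun, Set.indicator_of_notMem hu]
        simp only [abs_zero]
        positivity)
    (by filter_upwards with u using hfun_tendsto u)
  have : ∫ u, Set.indicator (Iic (0:ℝ)) (fun u => Real.exp (-(u^2/2))) u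
      = Real.sqrt (π/2) := by
    rw [MeasureTheory.integral_indicator measurableSet_Iic]
    exact integral_G
  rwa [this] at key



lemma change_of_var {n : ℕ} (hn : 0 < n) :
    ∫ t in (0:ℝ)..n, t^n * Real.exp (-t)
      = Real.sqrt n * ((n:ℝ)^n * Real.exp (-n)) * ∫ u, hfun n u := by
  have hs : (0:ℝ) < Real.sqrt n := Real.sqrt_pos.mpr (by exact_mod_cast hn)
  have key := intervalIntegral.integral_comp_mul_add
    (f := fun t => t^n * Real.exp (-t)) (a := -Real.sqrt n) (b := 0) hs.ne' (n:ℝ)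
  have hss : Real.sqrt n * Real.sqrt n = n := Real.mul_self_sqrt (Nat.cast_nonneg n)
  rw [show Real.sqrt n * -Real.sqrt n + n = 0 by rw [mul_neg, hss]; ring,
    show Real.sqrt n * 0 + n = (n:ℝ) by ring] at key
  have heq : ∀ u : ℝ, (Real.sqrt n * u + n)^n * Real.exp (-(Real.sqrt n * u + n))
      = (n:ℝ)^n * Real.exp (-(n:ℝ)) * gfun n u := by
    intro u
    have hb : Real.sqrt n * u + (n:ℝ) = (n:ℝ) * (1 + u / Real.sqrt n) := by
      have h1 : (n:ℝ) * (1 + u / Real.sqrt n) = n + ((n:ℝ) / Real.sqrt n) * u := by ring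
      rw [h1, Real.div_sqrt]; ring
    rw [gfun, show -(Real.sqrt n * u + (n:ℝ)) = -(n:ℝ) + -(Real.sqrt n * u) by ring,
      Real.exp_add, hb, mul_pow]
    ring
  simp only [heq] at key
  rw [intervalIntegral.integral_const_mul] at key
  have hJ : ∫ u in (-Real.sqrt n)..0, gfun n u = ∫ u, hfun n u := by
    rw [intervalIntegral.integral_of_le (by linarith), hfun,
      MeasureTheory.integral_indicator measurableSet_Ioc]
  rw [hJ] at key
  have : ∫ t in (0:ℝ)..(n:ℝ), t^n * Real.exp (-t)
      = Real.sqrt n * ((Real.sqrt n)⁻¹ • ∫ t in (0:ℝ)..(n:ℝ), t^n * Real.exp (-t)) := by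
    rw [smul_eq_mul, ← mul_assoc, mul_inv_cancel₀ hs.ne', one_mul]
  rw [this, ← key]
  ring

lemma sqrt_pi_half_val : Real.sqrt (π/2) / (Real.sqrt 2 * Real.sqrt π) = 1/2 := by
  rw [Real.sqrt_div Real.pi_pos.le]
  have h2 : Real.sqrt 2 * Real.sqrt 2 = 2 := Real.mul_self_sqrt (by norm_num)
  have hπ : (0:ℝ) < Real.sqrt π := Real.sqrt_pos.mpr Real.pi_pos
  have h2' : (0:ℝ) < Real.sqrt 2 := Real.sqrt_pos.mpr (by norm_num)
  field_simp
  nlinarith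

lemma stirling_key {n : ℕ} (hn : 0 < n) :
    Real.sqrt 2 * Stirling.stirlingSeq n * (Real.sqrt n * ((n:ℝ)^n * Real.exp (-(n:ℝ))))
      = (Nat.factorial n : ℝ) := by
  have hs : (0:ℝ) < Real.sqrt n := Real.sqrt_pos.mpr (by exact_mod_cast hn)
  have h2' : (0:ℝ) < Real.sqrt 2 := Real.sqrt_pos.mpr (by norm_num)
  have hnn : (0:ℝ) < (n:ℝ)^n := by positivity
  rw [Stirling.stirlingSeq, Real.sqrt_mul (by norm_num : (0:ℝ) ≤ 2) (n:ℝ), div_pow,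
    Real.exp_neg, ← Real.exp_one_pow]
  have hexp : (0:ℝ) < Real.exp 1 ^ n := by positivity
  field_simp

lemma tendsto_ratio :
    Tendsto (fun n : ℕ => (∫ t in (0:ℝ)..n, t^n * Real.exp (-t)) / (Nat.factorial n : ℝ))
      atTop (nhds (1/2)) := by
  have hstir := Stirling.tendsto_stirlingSeq_sqrt_pi
  have hJ := tendsto_integral_hfun
  have hlim : Tendsto (fun n : ℕ => (∫ u, hfun n u) / (Real.sqrt 2 * Stirling.stirlingSeq n))
      atTop (nhds (Real.sqrt (π/2) / (Real.sqrt 2 * Real.sqrt π))) := by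
    apply hJ.div ((tendsto_const_nhds.mul hstir))
    positivity
  rw [sqrt_pi_half_val] at hlim
  refine hlim.congr' ?_
  filter_upwards [eventually_ge_atTop 1] with n hn
  have hn' : 0 < n := hn
  have hfac : (0:ℝ) < (Nat.factorial n : ℝ) := by exact_mod_cast Nat.factorial_pos n
  have hkey := stirling_key hn'
  have hst : Real.sqrt 2 * Stirling.stirlingSeq n ≠ 0 := by
    intro h
    rw [h, zero_mul] at hkey
    exact hfac.ne' hkey.symm
  have hc : Real.sqrt n * ((n:ℝ)^n * Real.exp (-(n:ℝ))) ≠ 0 := by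
    have hs : (0:ℝ) < Real.sqrt n := Real.sqrt_pos.mpr (by exact_mod_cast hn')
    positivity
  rw [change_of_var hn', ← hkey]
  field_simp

lemma tendsto_T :
    Tendsto (fun n : ℕ => Real.exp (-(n:ℝ)) * ∑ i ∈ Finset.range (n+1), (n:ℝ)^i / (Nat.factorial i))
      atTop (nhds (1/2)) := by
  have h := tendsto_ratio
  have heq : ∀ n : ℕ,
      Real.exp (-(n:ℝ)) * ∑ i ∈ Finset.range (n+1), (n:ℝ)^i / (Nat.factorial i)
        = 1 - (∫ t in (0:ℝ)..n, t^n * Real.exp (-t)) / (Nat.factorial n : ℝ) := by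
    intro n
    have hfac : (0:ℝ) < (Nat.factorial n : ℝ) := by exact_mod_cast Nat.factorial_pos n
    rw [incomplete_gamma_identity n n]
    field_simp
    ring
  simp only [heq]
  have h2 : Tendsto (fun n : ℕ =>
      1 - (∫ t in (0:ℝ)..n, t^n * Real.exp (-t)) / (Nat.factorial n : ℝ))
      atTop (nhds (1 - 1/2)) := tendsto_const_nhds.sub h
  norm_num at h2
  exact h2



lemma sum_statw (s K : ℕ) : ∑ j ∈ Finset.range (s+K+1), statw s 1 j
    = (∑ j ∈ Finset.range (s+1), (s:ℝ)^j/(Nat.factorial j))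
      + K * ((s:ℝ)^s/(Nat.factorial s)) := by
  rw [show s+K+1 = (s+1)+K by ring, Finset.sum_range_add]
  congr 1
  · apply Finset.sum_congr rfl
    intro j hj
    rw [Finset.mem_range, Nat.lt_succ_iff] at hj
    simp [statw, hj]
  · rw [Finset.sum_congr rfl (fun i _ => ?_), Finset.sum_const, Finset.card_range,
      nsmul_eq_mul]
    show statw s 1 (s + 1 + i) = (s:ℝ)^s/(Nat.factorial s)
    have : ¬ (s + 1 + i ≤ s) := by omega
    simp [statw, this]

theorem pis_limit_rho_one (η : ℝ) (hη : 0 < η) (K : ℕ → ℕ) (hK : ∀ s, 0 < K s)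
    (hlim : Tendsto (fun s : ℕ => (K s : ℝ) / Real.sqrt s) atTop (nhds η)) :
    Tendsto (fun s : ℕ => Real.sqrt s * statPi s (K s) 1 s) atTop
      (nhds (1 / (Real.sqrt (Real.pi / 2) + η))) := by
  have hstir := Stirling.tendsto_stirlingSeq_sqrt_pi
  have hconst : Real.sqrt 2 * (1/2) * Real.sqrt π = Real.sqrt (π/2) := by
    have h := sqrt_pi_half_val
    have hne : Real.sqrt 2 * Real.sqrt π ≠ 0 := by positivity
    rw [div_eq_iff hne] at h
    rw [h]; ring
  have hden : Tendsto (fun s : ℕ =>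
      Real.sqrt 2 * (Real.exp (-(s:ℝ)) * ∑ i ∈ Finset.range (s+1), (s:ℝ)^i / (Nat.factorial i))
        * Stirling.stirlingSeq s + (K s : ℝ) / Real.sqrt s) atTop
      (nhds (Real.sqrt (π/2) + η)) := by
    have h1 := ((tendsto_const_nhds (x := Real.sqrt 2)).mul tendsto_T).mul hstir
    rw [hconst] at h1
    exact h1.add hlim
  have hpos : (0:ℝ) < Real.sqrt (π/2) + η := by
    have : (0:ℝ) < Real.sqrt (π/2) := Real.sqrt_pos.mpr (by positivity)
    linarith
  have hmain := (tendsto_const_nhds (x := (1:ℝ))).div hden hpos.ne'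
  refine hmain.congr' ?_
  filter_upwards [eventually_ge_atTop 1] with s hs1
  simp only [Pi.div_apply]
  have hs0 : 0 < s := hs1
  have hss : (0:ℝ) < (s:ℝ)^s := by positivity
  have hsq : (0:ℝ) < Real.sqrt s := Real.sqrt_pos.mpr (by exact_mod_cast hs0)
  have hfac : (0:ℝ) < (Nat.factorial s : ℝ) := by exact_mod_cast Nat.factorial_pos s
  have hA : (0:ℝ) < ∑ j ∈ Finset.range (s+1), (s:ℝ)^j/(Nat.factorial j) := by
    apply Finset.sum_pos
    · intro j _
      have : (0:ℝ) < (Nat.factorial j : ℝ) := by exact_mod_cast Nat.factorial_pos j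
      positivity
    · exact Finset.nonempty_range_iff.mpr (by omega)
  have hKpos : (0:ℝ) < (K s : ℝ) := by exact_mod_cast hK s
  have hexp : (0:ℝ) < Real.exp (-(s:ℝ)) := Real.exp_pos _
  have hkey := stirling_key hs0
  have hst : Stirling.stirlingSeq s
      = (Nat.factorial s : ℝ) / (Real.sqrt 2 * (Real.sqrt s * ((s:ℝ)^s * Real.exp (-(s:ℝ))))) := by
    rw [eq_div_iff (by positivity)]
    linarith [hkey]
  have hw : statw s 1 s = (s:ℝ)^s / (Nat.factorial s) := by simp [statw]
  rw [statPi, sum_statw, hw, hst]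
  field_simp
end

section
/- The improper Riemann integral ∫_0^∞ e^{u²/2} Φ(−u)² du equals (log 2)/(2√(2π)). -/
open Real Set MeasureTheory Filter

/-- Standard normal cumulative distribution function. -/
noncomputable def normalCDF (x : ℝ) : ℝ :=
  (Real.sqrt (2 * Real.pi))⁻¹ * ∫ v in Set.Iic x, Real.exp (-v ^ 2 / 2)

private lemma cdf_rep {u : ℝ} (hu : 0 < u) :
    (∫ v in Set.Iic (-u), Real.exp (-v ^ 2 / 2))
      = ∫ t in Set.Ioi (1:ℝ), u * Real.exp (-(u*t) ^ 2 / 2) := by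
  have h1 := integral_comp_neg_Iic (-u) (fun v => Real.exp (-v ^ 2 / 2))
  simp only [neg_neg, neg_sq] at h1
  have h2 := integral_comp_mul_left_Ioi (fun v => Real.exp (-v ^ 2 / 2)) 1 hu
  simp only [mul_one] at h2
  rw [h1, integral_const_mul, h2, smul_eq_mul, ← mul_assoc, mul_inv_cancel₀ hu.ne', one_mul]

private lemma integrableOn_sq_gauss {b : ℝ} (hb : 0 < b) :
    IntegrableOn (fun x => x^2 * Real.exp (-b * x^2/2)) (Ioi 0) := by
  have h := integrableOn_rpow_mul_exp_neg_mul_sq (half_pos hb) (s := 2) (by norm_num)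
  have e : (fun x:ℝ => x^2 * Real.exp (-b*x^2/2)) = fun x => x ^ (2:ℝ) * Real.exp (-(b/2)*x^2) := by
    funext x
    rw [show (2:ℝ) = ((2:ℕ):ℝ) by norm_num, Real.rpow_natCast]
    ring_nf
  rw [e]; exact h

private lemma gauss_sq_tendsto {b : ℝ} (hb : 0 < b) :
    Tendsto (fun x => -x * Real.exp (-b * x^2/2) / b) atTop (nhds 0) := by
  have h := rpow_mul_exp_neg_mul_sq_isLittleO_exp_neg (half_pos hb) 1
  have h0 : Tendsto (fun x:ℝ => Real.exp (-(1/2) * x)) atTop (nhds 0) := by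
    apply Real.tendsto_exp_atBot.comp
    exact Tendsto.const_mul_atTop_of_neg (by norm_num : (-(1/2):ℝ) < 0) tendsto_id
  have h1 : Tendsto (fun x:ℝ => x ^ (1:ℝ) * Real.exp (-(b/2) * x^2)) atTop (nhds 0) :=
    h.tendsto_zero_of_tendsto h0
  have e : ∀ᶠ x in atTop, -x * Real.exp (-b * x^2/2) / b
      = (-b⁻¹) * (x ^ (1:ℝ) * Real.exp (-(b/2) * x^2)) := by
    filter_upwards [eventually_ge_atTop (0:ℝ)] with x hx
    rw [Real.rpow_one]; ring_nf
  rw [show (0:ℝ) = (-b⁻¹) * 0 by ring]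
  exact Tendsto.congr' (e.mono fun x hx => hx.symm) ((h1.const_mul _))

private lemma gauss_sq {b : ℝ} (hb : 0 < b) :
    ∫ x in Ioi (0:ℝ), x^2 * Real.exp (-b * x^2 / 2)
      = Real.sqrt (2*Real.pi) / (2 * b * Real.sqrt b) := by
  set F : ℝ → ℝ := fun x => -x * Real.exp (-b * x^2/2) / b with hF
  have hderiv : ∀ x : ℝ, HasDerivAt F
      (x^2 * Real.exp (-b * x^2/2) - Real.exp (-b * x^2/2) / b) x := by
    intro x
    have hg : HasDerivAt (fun x:ℝ => -b * x^2/2) (-b * x) x := by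
      have := (hasDerivAt_pow 2 x).const_mul (-b)
      have := this.div_const 2
      convert this using 1
      · exact rfl
      · exact rfl
      · push_cast; ring
    have he := hg.exp
    have hx : HasDerivAt (fun x:ℝ => -x/b) (-1/b) x := by
      simpa using ((hasDerivAt_id x).neg.div_const b)
    have := hx.mul he
    convert this using 1
    · exact rfl
    · exact rfl
    · funext y; simp only [hF, Pi.mul_apply]; ring
    · field_simp; ring
  have hFint : IntegrableOn (fun x => x^2 * Real.exp (-b * x^2/2) - Real.exp (-b * x^2/2) / b)
      (Ioi 0) := by
    apply (integrableOn_sq_gauss hb).sub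
    have : IntegrableOn (fun x:ℝ => Real.exp (-(b/2) * x^2)) (Ioi 0) :=
      (integrable_exp_neg_mul_sq (half_pos hb)).integrableOn
    have e : (fun x:ℝ => Real.exp (-b*x^2/2) / b) = fun x => b⁻¹ * Real.exp (-(b/2)*x^2) := by
      funext x; ring_nf
    rw [e]; exact this.const_mul _
  have key := integral_Ioi_of_hasDerivAt_of_tendsto
    (hderiv 0).continuousAt.continuousWithinAt (fun x _ => hderiv x) hFint (gauss_sq_tendsto hb)
  have hF0 : F 0 = 0 := by simp [hF]
  rw [hF0, sub_zero] at key
  have hsplit : ∫ x in Ioi (0:ℝ), (x^2 * Real.exp (-b * x^2/2) - Real.exp (-b * x^2/2) / b)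
      = (∫ x in Ioi (0:ℝ), x^2 * Real.exp (-b * x^2/2))
        - ∫ x in Ioi (0:ℝ), Real.exp (-b * x^2/2) / b := by
    apply integral_sub (integrableOn_sq_gauss hb)
    have : IntegrableOn (fun x:ℝ => Real.exp (-(b/2) * x^2)) (Ioi 0) :=
      (integrable_exp_neg_mul_sq (half_pos hb)).integrableOn
    have e : (fun x:ℝ => Real.exp (-b*x^2/2) / b) = fun x => b⁻¹ * Real.exp (-(b/2)*x^2) := by
      funext x; ring_nf
    rw [e]; exact this.const_mul _
  rw [hsplit] at key
  have hgauss : ∫ x in Ioi (0:ℝ), Real.exp (-b * x^2/2) / b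
      = (Real.sqrt (Real.pi / (b/2)) / 2) / b := by
    rw [show (fun x:ℝ => Real.exp (-b*x^2/2) / b) = fun x => b⁻¹ * Real.exp (-(b/2)*x^2) from
      by funext x; ring_nf]
    rw [integral_const_mul, integral_gaussian_Ioi]
    field_simp
  rw [hgauss] at key
  have : (∫ x in Ioi (0:ℝ), x^2 * Real.exp (-b * x^2/2)) = Real.sqrt (Real.pi/(b/2)) / 2 / b := by
    linarith
  rw [this]
  rw [show Real.pi / (b/2) = 2*Real.pi/b by ring,
    Real.sqrt_div (by positivity : (0:ℝ) ≤ 2*Real.pi)]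
  have hsb : Real.sqrt b ≠ 0 := by positivity
  field_simp

section
variable {t : ℝ} (ht : 1 < t)
include ht

private lemma c2pos : 0 < t^2 - 1 := by nlinarith

private lemma qpos {s : ℝ} : 0 < s^2 + (t^2 - 1) := by nlinarith [sq_nonneg s]

private lemma Fderiv : ∀ s : ℝ, HasDerivAt (fun s => s / ((t^2-1) * Real.sqrt (s^2 + (t^2-1))))
    (((s^2 + (t^2-1)) * Real.sqrt (s^2 + (t^2-1)))⁻¹) s := by
  intro s
  have hq : 0 < s^2 + (t^2-1) := qpos ht
  have hr : 0 < Real.sqrt (s^2 + (t^2-1)) := Real.sqrt_pos.mpr hq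
  have hq' : HasDerivAt (fun s : ℝ => s^2 + (t^2-1)) (2*s) s := by
    simpa using (hasDerivAt_pow 2 s).add_const (t^2-1)
  have hc2 : (0:ℝ) < t^2 - 1 := c2pos ht
  have hr' : HasDerivAt (fun s : ℝ => Real.sqrt (s^2 + (t^2-1)))
      (s / Real.sqrt (s^2 + (t^2-1))) s := by
    have := (Real.hasDerivAt_sqrt hq.ne').comp s hq'
    convert this using 1
    · exact rfl
    · exact rfl
    · exact rfl
    field_simp
  have hd : HasDerivAt (fun s : ℝ => (t^2-1) * Real.sqrt (s^2 + (t^2-1)))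
      ((t^2-1) * (s / Real.sqrt (s^2 + (t^2-1)))) s := hr'.const_mul _
  have := (hasDerivAt_id s).div hd (mul_pos hc2 hr).ne'
  convert this using 1
  · exact rfl
  · exact rfl
  · exact rfl
  have hr2 : Real.sqrt (s^2 + (t^2-1)) ^ 2 = s^2 + (t^2-1) := Real.sq_sqrt hq.le
  rw [id_eq]
  field_simp
  linear_combination (-s^2) * hr2

private lemma Ftendsto : Tendsto (fun s => s / ((t^2-1) * Real.sqrt (s^2 + (t^2-1)))) atTop
    (nhds ((t^2-1)⁻¹)) := by
  have hc2 : (0:ℝ) < t^2 - 1 := c2pos ht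
  have h1 : Tendsto (fun s : ℝ => 1 + (t^2-1)/s^2) atTop (nhds 1) := by
    have : Tendsto (fun s : ℝ => (t^2-1)/s^2) atTop (nhds 0) := by
      apply Tendsto.div_atTop tendsto_const_nhds
      exact tendsto_pow_atTop (by norm_num) |>.comp tendsto_id
    simpa using (tendsto_const_nhds (x := (1:ℝ))).add this
  have h2 : Tendsto (fun x : ℝ => ((t^2-1) * Real.sqrt x)⁻¹) (nhds 1) (nhds ((t^2-1)⁻¹)) := by
    have hcont : ContinuousAt (fun x : ℝ => ((t^2-1) * Real.sqrt x)⁻¹) 1 := by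
      apply ContinuousAt.inv₀
      · exact (Real.continuous_sqrt.continuousAt).const_mul _
      · simp [hc2.ne']
    simpa using hcont.tendsto
  have := h2.comp h1
  apply this.congr'
  filter_upwards [eventually_gt_atTop (0:ℝ)] with s hs
  have : Real.sqrt (s^2 + (t^2-1)) = s * Real.sqrt (1 + (t^2-1)/s^2) := by
    rw [← Real.sqrt_sq hs.le, ← Real.sqrt_mul (by positivity)]
    congr 1
    field_simp
    exact Real.sq_sqrt (by positivity)
  have hX : 0 < Real.sqrt (1 + (t^2-1)/s^2) := Real.sqrt_pos.mpr (by positivity)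
  rw [Function.comp_apply, this]
  rw [eq_div_iff (by positivity)]
  field_simp

private lemma integral_power_law :
    (∫ s in Ioi (1:ℝ), ((s^2 + (t^2-1)) * Real.sqrt (s^2 + (t^2-1)))⁻¹ = 1/(t*(t+1))) ∧
    IntegrableOn (fun s => ((s^2 + (t^2-1)) * Real.sqrt (s^2 + (t^2-1)))⁻¹) (Ioi (1:ℝ)) := by
  have hc2 : (0:ℝ) < t^2 - 1 := c2pos ht
  have ht0 : (0:ℝ) < t := by linarith
  have hcont : ContinuousWithinAt (fun s => s / ((t^2-1) * Real.sqrt (s^2 + (t^2-1)))) (Ici 1) 1 :=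
    (Fderiv ht 1).continuousAt.continuousWithinAt
  have hpos : ∀ s ∈ Ioi (1:ℝ), 0 ≤ ((s^2 + (t^2-1)) * Real.sqrt (s^2 + (t^2-1)))⁻¹ := by
    intro s _; positivity
  have hval := integral_Ioi_of_hasDerivAt_of_nonneg hcont (fun s _ => Fderiv ht s) hpos
    (Ftendsto ht)
  have hint := integrableOn_Ioi_deriv_of_nonneg hcont (fun s _ => Fderiv ht s) hpos (Ftendsto ht)
  refine ⟨?_, hint⟩
  rw [hval]
  have h1 : Real.sqrt ((1:ℝ)^2 + (t^2-1)) = t := by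
    rw [show (1:ℝ)^2 + (t^2-1) = t^2 by ring, Real.sqrt_sq ht0.le]
  rw [h1]
  field_simp
  ring
end

private lemma Gderiv : ∀ t ∈ Ioi (1:ℝ), HasDerivAt (fun t => Real.log t - Real.log (t+1))
    ((t*(t+1))⁻¹) t := by
  intro t ht
  have ht0 : (0:ℝ) < t := lt_trans one_pos ht
  have h1 := Real.hasDerivAt_log ht0.ne'
  have h2 : HasDerivAt (fun t : ℝ => Real.log (t+1)) (t+1)⁻¹ t := by
    have := Real.hasDerivAt_log (by positivity : t+1 ≠ 0)
    exact this.comp t ((hasDerivAt_id t).add_const 1) |>.congr_deriv (mul_one _)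
  convert h1.sub h2 using 1
  · exact rfl
  · exact rfl
  · exact rfl
  field_simp
  ring

private lemma Gtendsto : Tendsto (fun t : ℝ => Real.log t - Real.log (t+1)) atTop (nhds 0) := by
  have h1 : Tendsto (fun t : ℝ => 1 - (t+1)⁻¹) atTop (nhds 1) := by
    have : Tendsto (fun t : ℝ => (t+1)⁻¹) atTop (nhds 0) :=
      tendsto_inv_atTop_zero.comp (tendsto_atTop_add_const_right _ 1 tendsto_id)
    simpa using (tendsto_const_nhds (x := (1:ℝ))).sub this
  have h2 : Tendsto Real.log (nhds 1) (nhds 0) := by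
    have := (Real.continuousAt_log one_ne_zero).tendsto
    simpa using this
  apply (h2.comp h1).congr'
  filter_upwards [eventually_gt_atTop (0:ℝ)] with t ht
  rw [Function.comp_apply, show 1 - (t+1)⁻¹ = t/(t+1) by field_simp; ring,
    Real.log_div ht.ne' (by positivity)]

private lemma integral_inv_mul :
    (∫ t in Ioi (1:ℝ), (t*(t+1))⁻¹ = Real.log 2) ∧
    IntegrableOn (fun t : ℝ => (t*(t+1))⁻¹) (Ioi (1:ℝ)) := by
  have hcont : ContinuousWithinAt (fun t : ℝ => Real.log t - Real.log (t+1)) (Ici 1) 1 := by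
    apply ContinuousWithinAt.sub
    · exact (Real.continuousAt_log one_ne_zero).continuousWithinAt
    · exact ((Real.continuousAt_log (by norm_num)).comp (by fun_prop)).continuousWithinAt
  have hpos : ∀ t ∈ Ioi (1:ℝ), 0 ≤ (t*(t+1))⁻¹ := by
    intro t ht
    have : (0:ℝ) < t := lt_trans one_pos ht
    positivity
  refine ⟨?_, integrableOn_Ioi_deriv_of_nonneg hcont Gderiv hpos Gtendsto⟩
  rw [integral_Ioi_of_hasDerivAt_of_nonneg hcont Gderiv hpos Gtendsto]
  norm_num

/-- The triple-integral kernel. -/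
private noncomputable def kk (u t s : ℝ) : ℝ :=
  (2*Real.pi)⁻¹ * (u^2 * Real.exp (-(s^2 + (t^2-1)) * u^2 / 2))

private lemma kk_cont : Continuous (fun q : (ℝ × ℝ) × ℝ => kk q.1.1 q.1.2 q.2) := by
  unfold kk
  fun_prop

private lemma pointwise_u {u : ℝ} (hu : 0 < u) :
    ENNReal.ofReal (Real.exp (u^2/2) * normalCDF (-u)^2)
      = ∫⁻ t in Ioi (1:ℝ), ∫⁻ s in Ioi (1:ℝ), ENNReal.ofReal (kk u t s) := by
  set c := Real.sqrt (2*Real.pi) with hcdef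
  have hc : (0:ℝ) < c := Real.sqrt_pos.mpr (by positivity)
  set T := ∫ t in Ioi (1:ℝ), u * Real.exp (-(u*t) ^ 2 / 2) with hTdef
  have hCDF : normalCDF (-u) = c⁻¹ * T := by
    rw [normalCDF, cdf_rep hu]
  have hA_int : IntegrableOn (fun t : ℝ => u * Real.exp (-(u*t) ^ 2 / 2)) (Ioi 1) := by
    have h0 : Integrable (fun t : ℝ => Real.exp (-(u^2/2) * t^2)) :=
      integrable_exp_neg_mul_sq (by positivity)
    have e : (fun t : ℝ => u * Real.exp (-(u*t)^2/2))
        = fun t => u * Real.exp (-(u^2/2) * t^2) := by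
      funext x; congr 1; ring
    rw [e]
    exact (h0.const_mul u).integrableOn
  have hA_nn : 0 ≤ᵐ[volume.restrict (Ioi (1:ℝ))] fun t : ℝ => u * Real.exp (-(u*t) ^ 2 / 2) :=
    ae_of_all _ fun t => mul_nonneg hu.le (Real.exp_pos _).le
  have hT_nn : 0 ≤ T :=
    setIntegral_nonneg measurableSet_Ioi fun t _ => mul_nonneg hu.le (Real.exp_pos _).le
  have hofT : ENNReal.ofReal T = ∫⁻ t in Ioi (1:ℝ), ENNReal.ofReal (u * Real.exp (-(u*t)^2/2)) :=
    ofReal_integral_eq_lintegral_ofReal hA_int hA_nn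
  set E := Real.exp (u^2/2) * (c⁻¹)^2 with hEdef
  have hE_nn : 0 ≤ E := by positivity
  have h0 : Real.exp (u^2/2) * normalCDF (-u)^2 = (E * T) * T := by
    rw [hCDF, hEdef]; ring
  rw [h0, ENNReal.ofReal_mul (mul_nonneg hE_nn hT_nn), ENNReal.ofReal_mul hE_nn]
  have hne : ENNReal.ofReal E * ENNReal.ofReal T ≠ ⊤ :=
    ENNReal.mul_ne_top ENNReal.ofReal_ne_top ENNReal.ofReal_ne_top
  calc ENNReal.ofReal E * ENNReal.ofReal T * ENNReal.ofReal T
      = ENNReal.ofReal E * ENNReal.ofReal T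
          * ∫⁻ t in Ioi (1:ℝ), ENNReal.ofReal (u * Real.exp (-(u*t)^2/2)) := by rw [← hofT]
    _ = ∫⁻ t in Ioi (1:ℝ), ENNReal.ofReal E * ENNReal.ofReal T
          * ENNReal.ofReal (u * Real.exp (-(u*t)^2/2)) :=
        (lintegral_const_mul' _ _ hne).symm
    _ = ∫⁻ t in Ioi (1:ℝ), ∫⁻ s in Ioi (1:ℝ), ENNReal.ofReal (kk u t s) := by
        apply setLIntegral_congr_fun measurableSet_Ioi
        intro t _
        have hne2 : ENNReal.ofReal E * ENNReal.ofReal (u * Real.exp (-(u*t)^2/2)) ≠ ⊤ :=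
          ENNReal.mul_ne_top ENNReal.ofReal_ne_top ENNReal.ofReal_ne_top
        calc ENNReal.ofReal E * ENNReal.ofReal T * ENNReal.ofReal (u * Real.exp (-(u*t)^2/2))
            = ENNReal.ofReal E * ENNReal.ofReal (u * Real.exp (-(u*t)^2/2))
              * ∫⁻ s in Ioi (1:ℝ), ENNReal.ofReal (u * Real.exp (-(u*s)^2/2)) := by
              rw [← hofT]; ring
          _ = ∫⁻ s in Ioi (1:ℝ), ENNReal.ofReal E * ENNReal.ofReal (u * Real.exp (-(u*t)^2/2))
              * ENNReal.ofReal (u * Real.exp (-(u*s)^2/2)) :=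
              (lintegral_const_mul' _ _ hne2).symm
          _ = ∫⁻ s in Ioi (1:ℝ), ENNReal.ofReal (kk u t s) := by
              apply setLIntegral_congr_fun measurableSet_Ioi
              intro s _
              beta_reduce
              rw [← ENNReal.ofReal_mul hE_nn, ← ENNReal.ofReal_mul
                (mul_nonneg hE_nn (mul_nonneg hu.le (Real.exp_pos _).le))]
              congr 1
              rw [hEdef]
              unfold kk
              have hcsq : (c⁻¹)^2 = (2*Real.pi)⁻¹ := by
                rw [hcdef, ← Real.sqrt_inv, Real.sq_sqrt (by positivity)]
              rw [hcsq]
              rw [show -(s^2 + (t^2-1)) * u^2/2 = -(u*t)^2/2 + u^2/2 + -(u*s)^2/2 by ring,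
                Real.exp_add, Real.exp_add]
              ring

private lemma inner_u {t s : ℝ} (ht : 1 < t) (hs : 1 < s) :
    ∫⁻ u in Ioi (0:ℝ), ENNReal.ofReal (kk u t s)
      = ENNReal.ofReal ((2 * Real.sqrt (2*Real.pi))⁻¹
          * ((s^2 + (t^2-1)) * Real.sqrt (s^2 + (t^2-1)))⁻¹) := by
  have hb : 0 < s^2 + (t^2-1) := qpos ht
  have hint : IntegrableOn (fun u => kk u t s) (Ioi 0) := by
    unfold kk
    exact (integrableOn_sq_gauss hb).const_mul _
  have hnn : 0 ≤ᵐ[volume.restrict (Ioi (0:ℝ))] fun u => kk u t s := by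
    apply ae_of_all
    intro u
    unfold kk
    positivity
  rw [← ofReal_integral_eq_lintegral_ofReal hint hnn]
  congr 1
  unfold kk
  rw [integral_const_mul, gauss_sq hb]
  have hsb : (0:ℝ) < Real.sqrt (s^2 + (t^2-1)) := Real.sqrt_pos.mpr hb
  have hsc : (0:ℝ) < Real.sqrt (2*Real.pi) := Real.sqrt_pos.mpr (by positivity)
  have hc2 : Real.sqrt (2*Real.pi) ^ 2 = 2*Real.pi := Real.sq_sqrt (by positivity)
  have hr2 : Real.sqrt (s^2 + (t^2-1)) ^ 2 = s^2 + (t^2-1) := Real.sq_sqrt hb.le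
  set c := Real.sqrt (2*Real.pi) with hcdef
  set r := Real.sqrt (s^2 + (t^2-1)) with hrdef
  rw [← hc2, ← hr2]
  field_simp

theorem integral_J0 :
    ∫ u in Set.Ioi (0 : ℝ), Real.exp (u ^ 2 / 2) * normalCDF (-u) ^ 2
      = Real.log 2 / (2 * Real.sqrt (2 * Real.pi)) := by
  have hgi : Integrable (fun v : ℝ => Real.exp (-v^2/2)) := by
    have h0 : Integrable (fun v : ℝ => Real.exp (-(1/2 : ℝ) * v^2)) :=
      integrable_exp_neg_mul_sq (by norm_num)
    have e : (fun v : ℝ => Real.exp (-v^2/2)) = fun v => Real.exp (-(1/2:ℝ) * v^2) := by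
      funext v; congr 1; ring
    rw [e]; exact h0
  have hmono : Monotone (fun x : ℝ => ∫ v in Iic x, Real.exp (-v^2/2)) := by
    intro a b hab
    apply setIntegral_mono_set hgi.integrableOn
    · exact ae_of_all _ fun v => (Real.exp_pos _).le
    · exact HasSubset.Subset.eventuallyLE (Iic_subset_Iic.mpr hab)
  have hcdfm : Measurable normalCDF := by
    unfold normalCDF
    exact measurable_const.mul hmono.measurable
  have hfm : Measurable (fun u : ℝ => Real.exp (u^2/2) * normalCDF (-u)^2) := by
    apply Measurable.mul
    · fun_prop
    · exact ((hcdfm.comp measurable_neg).pow_const 2)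
  have hcdf_nn : ∀ x : ℝ, 0 ≤ normalCDF x := by
    intro x
    unfold normalCDF
    apply mul_nonneg (by positivity)
    exact setIntegral_nonneg measurableSet_Iic fun v _ => (Real.exp_pos _).le
  have hf_nn : 0 ≤ᵐ[volume.restrict (Ioi (0:ℝ))]
      fun u : ℝ => Real.exp (u^2/2) * normalCDF (-u)^2 :=
    ae_of_all _ fun u => mul_nonneg (Real.exp_pos _).le (sq_nonneg _)
  rw [integral_eq_lintegral_of_nonneg_ae hf_nn hfm.aestronglyMeasurable]
  have hkm : Measurable (fun q : (ℝ × ℝ) × ℝ => ENNReal.ofReal (kk q.1.1 q.1.2 q.2)) :=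
    ENNReal.measurable_ofReal.comp kk_cont.measurable
  have key : (∫⁻ u in Ioi (0:ℝ), ENNReal.ofReal (Real.exp (u^2/2) * normalCDF (-u)^2))
      = ENNReal.ofReal (Real.log 2 / (2 * Real.sqrt (2*Real.pi))) := by
    calc ∫⁻ u in Ioi (0:ℝ), ENNReal.ofReal (Real.exp (u^2/2) * normalCDF (-u)^2)
        = ∫⁻ u in Ioi (0:ℝ), ∫⁻ t in Ioi (1:ℝ), ∫⁻ s in Ioi (1:ℝ),
            ENNReal.ofReal (kk u t s) := by
          apply setLIntegral_congr_fun measurableSet_Ioi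
          exact fun u hu => pointwise_u hu
      _ = ∫⁻ t in Ioi (1:ℝ), ∫⁻ u in Ioi (0:ℝ), ∫⁻ s in Ioi (1:ℝ),
            ENNReal.ofReal (kk u t s) := by
          apply lintegral_lintegral_swap
          exact (hkm.lintegral_prod_right').aemeasurable
      _ = ∫⁻ t in Ioi (1:ℝ), ∫⁻ s in Ioi (1:ℝ), ∫⁻ u in Ioi (0:ℝ),
            ENNReal.ofReal (kk u t s) := by
          apply lintegral_congr
          intro t
          apply lintegral_lintegral_swap
          have : Measurable (fun q : ℝ × ℝ => ENNReal.ofReal (kk q.1 t q.2)) := by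
            apply ENNReal.measurable_ofReal.comp
            have : Continuous (fun q : ℝ × ℝ => kk q.1 t q.2) := by
              unfold kk; fun_prop
            exact this.measurable
          exact this.aemeasurable
      _ = ∫⁻ t in Ioi (1:ℝ), ENNReal.ofReal
            ((2 * Real.sqrt (2*Real.pi))⁻¹ * (t*(t+1))⁻¹) := by
          apply setLIntegral_congr_fun measurableSet_Ioi
          intro t ht
          beta_reduce
          have step1 : ∫⁻ s in Ioi (1:ℝ), ∫⁻ u in Ioi (0:ℝ), ENNReal.ofReal (kk u t s)
              = ∫⁻ s in Ioi (1:ℝ), ENNReal.ofReal ((2 * Real.sqrt (2*Real.pi))⁻¹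
                  * ((s^2 + (t^2-1)) * Real.sqrt (s^2 + (t^2-1)))⁻¹) := by
            apply setLIntegral_congr_fun measurableSet_Ioi
            exact fun s hs => inner_u ht hs
          rw [step1]
          have hint : IntegrableOn (fun s : ℝ => (2 * Real.sqrt (2*Real.pi))⁻¹
              * ((s^2 + (t^2-1)) * Real.sqrt (s^2 + (t^2-1)))⁻¹) (Ioi 1) :=
            ((integral_power_law ht).2).const_mul _
          have hnn : 0 ≤ᵐ[volume.restrict (Ioi (1:ℝ))] fun s : ℝ =>
              (2 * Real.sqrt (2*Real.pi))⁻¹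
                * ((s^2 + (t^2-1)) * Real.sqrt (s^2 + (t^2-1)))⁻¹ := by
            apply ae_of_all
            intro s
            exact mul_nonneg (by positivity)
              (inv_nonneg.mpr (mul_nonneg (qpos ht).le (Real.sqrt_nonneg _)))
          rw [← ofReal_integral_eq_lintegral_ofReal hint hnn]
          congr 1
          rw [integral_const_mul, (integral_power_law ht).1, one_div]
      _ = ENNReal.ofReal (Real.log 2 / (2 * Real.sqrt (2*Real.pi))) := by
          have hint : IntegrableOn (fun t : ℝ => (2 * Real.sqrt (2*Real.pi))⁻¹
              * (t*(t+1))⁻¹) (Ioi 1) := (integral_inv_mul.2).const_mul _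
          have hnn : 0 ≤ᵐ[volume.restrict (Ioi (1:ℝ))] fun t : ℝ =>
              (2 * Real.sqrt (2*Real.pi))⁻¹ * (t*(t+1))⁻¹ := by
            filter_upwards [ae_restrict_mem measurableSet_Ioi] with t ht
            have ht0 : (0:ℝ) < t := lt_trans one_pos ht
            positivity
          rw [← ofReal_integral_eq_lintegral_ofReal hint hnn]
          congr 1
          rw [integral_const_mul, integral_inv_mul.1]
          ring
  rw [key, ENNReal.toReal_ofReal]
  exact div_nonneg (Real.log_nonneg one_le_two) (by positivity)
end

section
/- The error terms in the normal approximation to the Poisson cumulative distribution function satisfy: (1/√s) Σ_{i=0}^{s−1} (Π_i(s) − Φ((i − s)/√s)) → 0 as the integer s → ∞. -/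
open Filter Real MeasureTheory Set Topology

/-- Poisson(κ) probability mass function. -/
noncomputable def poissonPMF (κ : ℝ) (i : ℕ) : ℝ :=
  Real.exp (-κ) * κ ^ i / (Nat.factorial i)

/-- Poisson(κ) cumulative distribution function. -/
noncomputable def poissonCDF (κ : ℝ) (i : ℕ) : ℝ :=
  ∑ j ∈ Finset.range (i + 1), poissonPMF κ j

noncomputable def gss (v : ℝ) : ℝ := Real.exp (-v ^ 2 / 2)

lemma gss_integrable : Integrable gss := by
  have := integrable_exp_neg_mul_sq (b := (1:ℝ)/2) (by norm_num)
  refine this.congr ?_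
  filter_upwards with v
  unfold gss; ring_nf

lemma gss_cont : Continuous gss := by
  unfold gss; continuity

lemma gss_pos (v : ℝ) : 0 < gss v := Real.exp_pos _

lemma integral_gss : ∫ v, gss v = Real.sqrt (2*π) := by
  have := integral_gaussian ((1:ℝ)/2)
  rw [show ∫ v, gss v = ∫ x : ℝ, Real.exp (-(1/2) * x^2) by congr 1; ext x; unfold gss; ring_nf,
    this]
  rw [div_div_eq_mul_div, div_one, mul_comm]

lemma sqrt2pi_pos : 0 < Real.sqrt (2*π) := Real.sqrt_pos.2 (by positivity)

lemma normalCDF_nonneg (x : ℝ) : 0 ≤ normalCDF x := by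
  apply mul_nonneg (by positivity)
  exact setIntegral_nonneg measurableSet_Iic (fun v _ => (gss_pos v).le)

lemma normalCDF_le_one (x : ℝ) : normalCDF x ≤ 1 := by
  unfold normalCDF
  rw [inv_mul_le_iff₀ sqrt2pi_pos, mul_one, ← integral_gss]
  exact setIntegral_le_integral gss_integrable (Eventually.of_forall fun v => (gss_pos v).le)

lemma normalCDF_mono : Monotone normalCDF := by
  intro a b hab
  apply mul_le_mul_of_nonneg_left _ (by positivity)
  exact setIntegral_mono_set gss_integrable.integrableOn
    (Eventually.of_forall fun v => (gss_pos v).le)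
    (HasSubset.Subset.eventuallyLE (Iic_subset_Iic.2 hab))

lemma hasDerivAt_normalCDF (x : ℝ) :
    HasDerivAt normalCDF ((Real.sqrt (2*π))⁻¹ * gss x) x := by
  have key : ∀ y : ℝ, normalCDF y =
      (Real.sqrt (2*π))⁻¹ * ((∫ v in Set.Iic (0:ℝ), gss v) + ∫ v in (0:ℝ)..y, gss v) := by
    intro y
    unfold normalCDF
    congr 1
    rw [← intervalIntegral.integral_Iic_sub_Iic gss_integrable.integrableOn
      gss_integrable.integrableOn]
    unfold gss; ring
  rw [show normalCDF = fun y => (Real.sqrt (2*π))⁻¹ *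
      ((∫ v in Set.Iic (0:ℝ), gss v) + ∫ v in (0:ℝ)..y, gss v) from funext key]
  exact (((gss_cont.integral_hasStrictDerivAt 0 x).hasDerivAt.const_add _).const_mul _)

lemma normalCDF_cont : Continuous normalCDF :=
  continuous_iff_continuousAt.2 fun x => (hasDerivAt_normalCDF x).continuousAt

noncomputable def FF (x : ℝ) : ℝ := x * normalCDF x + (Real.sqrt (2*π))⁻¹ * gss x

lemma hasDerivAt_gss (x : ℝ) : HasDerivAt gss (-x * gss x) x := by
  have h1 : HasDerivAt (fun x : ℝ => -x^2/2) (-x) x := by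
    have := ((hasDerivAt_pow 2 x).neg).div_const 2
    simpa using this.congr_deriv (by ring)
  have := (Real.hasDerivAt_exp (-x^2/2)).comp x h1
  have e : gss = rexp ∘ fun x => -x^2/2 := rfl
  rw [e]; simpa [mul_comm] using this

lemma hasDerivAt_FF (x : ℝ) : HasDerivAt FF (normalCDF x) x := by
  have h1 := (hasDerivAt_id x).mul (hasDerivAt_normalCDF x)
  have h2 := (hasDerivAt_gss x).const_mul (Real.sqrt (2*π))⁻¹
  have h : HasDerivAt (fun y => y * normalCDF y + (Real.sqrt (2*π))⁻¹ * gss y) _ x := h1.add h2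
  unfold FF
  convert h using 1
  simp only [id_eq, gss]
  ring

lemma FF_cont : Continuous FF :=
  continuous_iff_continuousAt.2 fun x => (hasDerivAt_FF x).continuousAt

lemma FF_zero : FF 0 = (Real.sqrt (2*π))⁻¹ := by
  simp [FF, gss]

lemma integral_normalCDF (a b : ℝ) : ∫ x in a..b, normalCDF x = FF b - FF a :=
  intervalIntegral.integral_eq_sub_of_hasDerivAt (fun x _ => hasDerivAt_FF x)
    (normalCDF_cont.intervalIntegrable a b)

lemma gss4_integrable : Integrable (fun v : ℝ => Real.exp (-v^2/4)) := by
  have := integrable_exp_neg_mul_sq (b := (1:ℝ)/4) (by norm_num)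
  refine this.congr ?_
  filter_upwards with v
  ring_nf

lemma integral_gss4 : ∫ v : ℝ, Real.exp (-v^2/4) = 2 * Real.sqrt π := by
  have h := integral_gaussian ((1:ℝ)/4)
  rw [show (fun v : ℝ => Real.exp (-v^2/4)) = (fun x : ℝ => Real.exp (-(1/4) * x^2)) by
    ext x; ring_nf, h]
  rw [show π / (1/4 : ℝ) = 4 * π by ring, show (4:ℝ) * π = 2^2 * π by norm_num,
    Real.sqrt_mul (by positivity), Real.sqrt_sq (by norm_num : (0:ℝ) ≤ 2)]

lemma normalCDF_tail {T : ℝ} (hT : 0 ≤ T) :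
    normalCDF (-T) ≤ Real.sqrt 2 * Real.exp (-T^2/4) := by
  have key : ∫ v in Iic (-T), gss v ≤ Real.exp (-T^2/4) * (2 * Real.sqrt π) := by
    have step1 : ∫ v in Iic (-T), gss v
        ≤ ∫ v in Iic (-T), Real.exp (-T^2/4) * Real.exp (-v^2/4) := by
      apply setIntegral_mono_on gss_integrable.integrableOn
        ((gss4_integrable.const_mul _).integrableOn) measurableSet_Iic
      intro v hv
      rw [← Real.exp_add]
      apply Real.exp_le_exp.2
      have hv' : v ≤ -T := hv
      have : T^2 ≤ v^2 := by nlinarith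
      nlinarith
    refine step1.trans ?_
    rw [MeasureTheory.integral_const_mul]
    apply mul_le_mul_of_nonneg_left _ (Real.exp_pos _).le
    rw [← integral_gss4]
    exact setIntegral_le_integral gss4_integrable
      (Eventually.of_forall fun v => (Real.exp_pos _).le)
  unfold normalCDF
  calc (Real.sqrt (2*π))⁻¹ * ∫ v in Iic (-T), Real.exp (-v^2/2)
      ≤ (Real.sqrt (2*π))⁻¹ * (Real.exp (-T^2/4) * (2 * Real.sqrt π)) := by
        apply mul_le_mul_of_nonneg_left _ (by positivity)
        exact key
    _ = Real.sqrt 2 * Real.exp (-T^2/4) := by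
        rw [Real.sqrt_mul (by norm_num : (0:ℝ) ≤ 2)]
        have hπ : (0:ℝ) < Real.sqrt π := Real.sqrt_pos.2 Real.pi_pos
        have h2 : (0:ℝ) < Real.sqrt 2 := by positivity
        have hs : Real.sqrt 2 * Real.sqrt 2 = 2 := Real.mul_self_sqrt (by norm_num)
        rw [mul_inv]
        field_simp
        linear_combination -hs

lemma tendsto_sqrt_atTop : Tendsto (fun s : ℕ => Real.sqrt s) atTop atTop := by
  apply tendsto_atTop_atTop.2
  intro b
  refine ⟨⌈(max b 0)^2⌉₊, fun a ha => ?_⟩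
  have h1 : (max b 0)^2 ≤ (a:ℝ) := le_trans (Nat.le_ceil _) (Nat.cast_le.2 ha)
  calc b ≤ max b 0 := le_max_left _ _
    _ = Real.sqrt ((max b 0)^2) := (Real.sqrt_sq (le_max_right _ _)).symm
    _ ≤ Real.sqrt a := Real.sqrt_le_sqrt h1

lemma exp_decay1 : Tendsto (fun s : ℕ => (s:ℝ) * Real.exp (-((s:ℝ)/4))) atTop (𝓝 0) := by
  have h := tendsto_pow_mul_exp_neg_atTop_nhds_zero 1
  have hu : Tendsto (fun s : ℕ => (s:ℝ)/4) atTop atTop :=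
    (tendsto_natCast_atTop_atTop).atTop_div_const (by norm_num)
  have := (h.comp hu).const_mul (4:ℝ)
  rw [mul_zero] at this
  refine this.congr fun s => ?_
  simp only [Function.comp_apply, pow_one]
  ring

lemma exp_decay2 : Tendsto (fun s : ℕ => Real.exp (-((s:ℝ)/4))) atTop (𝓝 0) := by
  apply Real.tendsto_exp_atBot.comp
  apply tendsto_neg_atBot_iff.2
  exact (tendsto_natCast_atTop_atTop).atTop_div_const (by norm_num)

lemma exp_decay3 : Tendsto (fun s : ℕ => Real.exp (-((s:ℝ)/2))) atTop (𝓝 0) := by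
  apply Real.tendsto_exp_atBot.comp
  apply tendsto_neg_atBot_iff.2
  exact (tendsto_natCast_atTop_atTop).atTop_div_const (by norm_num)

lemma tendsto_FF_comp (u : ℕ → ℝ)
    (hu : ∀ᶠ s : ℕ in atTop, Real.sqrt s ≤ u s ∧ u s ≤ (s:ℝ) + 1) :
    Tendsto (fun s => FF (-(u s))) atTop (𝓝 0) := by
  apply squeeze_zero_norm' (a := fun s : ℕ =>
    ((s:ℝ)+1) * (Real.sqrt 2 * Real.exp (-((s:ℝ)/4)))
      + (Real.sqrt (2*π))⁻¹ * Real.exp (-((s:ℝ)/2)))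
  · filter_upwards [hu] with s hs
    obtain ⟨h1, h2⟩ := hs
    have hsq : (0:ℝ) ≤ Real.sqrt s := Real.sqrt_nonneg _
    have hu0 : 0 ≤ u s := hsq.trans h1
    have hss : Real.sqrt s * Real.sqrt s = (s:ℝ) := Real.mul_self_sqrt (by positivity)
    have hΦ : normalCDF (-(u s)) ≤ Real.sqrt 2 * Real.exp (-((s:ℝ)/4)) := by
      refine (normalCDF_tail hu0).trans ?_
      apply mul_le_mul_of_nonneg_left _ (Real.sqrt_nonneg 2)
      apply Real.exp_le_exp.2
      nlinarith
    have hg : gss (-(u s)) ≤ Real.exp (-((s:ℝ)/2)) := by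
      apply Real.exp_le_exp.2
      nlinarith
    have hΦ0 := normalCDF_nonneg (-(u s))
    have hg0 := (gss_pos (-(u s))).le
    have hc : (0:ℝ) ≤ (Real.sqrt (2*π))⁻¹ := by positivity
    calc ‖FF (-(u s))‖ ≤ ‖(-(u s)) * normalCDF (-(u s))‖
          + ‖(Real.sqrt (2*π))⁻¹ * gss (-(u s))‖ := norm_add_le _ _
      _ = u s * normalCDF (-(u s)) + (Real.sqrt (2*π))⁻¹ * gss (-(u s)) := by
          rw [norm_mul, norm_mul, Real.norm_eq_abs, Real.norm_eq_abs, Real.norm_eq_abs,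
            Real.norm_eq_abs, abs_neg, abs_of_nonneg hu0, abs_of_nonneg hΦ0,
            abs_of_nonneg hg0, abs_of_nonneg hc]
      _ ≤ ((s:ℝ)+1) * (Real.sqrt 2 * Real.exp (-((s:ℝ)/4)))
          + (Real.sqrt (2*π))⁻¹ * Real.exp (-((s:ℝ)/2)) := by
          gcongr
  · have hA : Tendsto (fun s : ℕ => ((s:ℝ)+1) * (Real.sqrt 2 * Real.exp (-((s:ℝ)/4))))
        atTop (𝓝 0) := by
      have := (exp_decay1.const_mul (Real.sqrt 2)).add (exp_decay2.const_mul (Real.sqrt 2))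
      norm_num at this
      refine this.congr fun s => ?_
      ring
    have hB := exp_decay3.const_mul (Real.sqrt (2*π))⁻¹
    norm_num at hB
    simpa using hA.add hB

lemma tendstoB :
    Tendsto (fun s : ℕ => (1/Real.sqrt s) *
        ∑ i ∈ Finset.range s, normalCDF (((i:ℝ) - s)/Real.sqrt s))
      atTop (𝓝 (Real.sqrt (2*π))⁻¹) := by
  have E1 : Tendsto (fun s : ℕ => FF (-(Real.sqrt s))) atTop (𝓝 0) := by
    apply tendsto_FF_comp
    filter_upwards [eventually_ge_atTop 1] with s hs
    have hs1 : (1:ℝ) ≤ (s:ℝ) := by exact_mod_cast hs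
    have h1 : (1:ℝ) ≤ Real.sqrt s := Real.one_le_sqrt.2 hs1
    have hss : Real.sqrt s * Real.sqrt s = (s:ℝ) := Real.mul_self_sqrt (by positivity)
    exact ⟨le_refl _, by nlinarith⟩
  have E2 : Tendsto (fun s : ℕ => FF (-(Real.sqrt s + 1/Real.sqrt s))) atTop (𝓝 0) := by
    apply tendsto_FF_comp
    filter_upwards [eventually_ge_atTop 1] with s hs
    have hs1 : (1:ℝ) ≤ (s:ℝ) := by exact_mod_cast hs
    have h1 : (1:ℝ) ≤ Real.sqrt s := Real.one_le_sqrt.2 hs1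
    have hss : Real.sqrt s * Real.sqrt s = (s:ℝ) := Real.mul_self_sqrt (by positivity)
    have hpos : (0:ℝ) < Real.sqrt s := by linarith
    constructor
    · have : (0:ℝ) ≤ 1/Real.sqrt s := by positivity
      linarith
    · have h2 : 1/Real.sqrt s ≤ 1 := by rw [div_le_one hpos]; exact h1
      nlinarith
  have E3 : Tendsto (fun s : ℕ => FF (-(1/Real.sqrt s))) atTop (𝓝 (Real.sqrt (2*π))⁻¹) := by
    rw [← FF_zero]
    apply (FF_cont.tendsto 0).comp
    have h := tendsto_inv_atTop_zero.comp _root_.tendsto_sqrt_atTop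
    have h2 := h.neg
    rw [neg_zero] at h2
    refine h2.congr fun s => ?_
    simp [one_div]
  have lo : Tendsto (fun s : ℕ => FF (-(1/Real.sqrt s)) - FF (-(Real.sqrt s + 1/Real.sqrt s)))
      atTop (𝓝 (Real.sqrt (2*π))⁻¹) := by simpa using E3.sub E2
  have hi : Tendsto (fun s : ℕ => FF 0 - FF (-(Real.sqrt s)))
      atTop (𝓝 (Real.sqrt (2*π))⁻¹) := by
    have h := (tendsto_const_nhds (x := FF 0) (f := atTop (α := ℕ))).sub E1
    rw [sub_zero] at h
    convert h using 2
    rw [FF_zero]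
  apply tendsto_of_tendsto_of_tendsto_of_le_of_le' lo hi
  · -- lower bound
    filter_upwards [eventually_ge_atTop 1] with s hs
    have hs1 : (1:ℝ) ≤ (s:ℝ) := by exact_mod_cast hs
    set t := Real.sqrt (s:ℝ) with htdef
    have htt : t * t = (s:ℝ) := Real.mul_self_sqrt (by positivity)
    have ht : (0:ℝ) < t := Real.sqrt_pos.2 (by linarith)
    set b : ℕ → ℝ := fun i => ((i:ℝ) - s - 1)/t with hbdef
    have hint : ∀ k, IntervalIntegrable normalCDF MeasureTheory.volume (b k) (b (k+1)) :=
      fun k => normalCDF_cont.intervalIntegrable _ _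
    have hsum := intervalIntegral.sum_integral_adjacent_intervals
      (a := b) (n := s) (μ := MeasureTheory.volume) (f := normalCDF) (fun k _ => hint k)
    have hb0 : b 0 = -(t + 1/t) := by
      simp only [hbdef]
      field_simp
      linear_combination htt
    have hbs : b s = -(1/t) := by
      simp only [hbdef]
      field_simp
      ring
    have hterm : ∀ i ∈ Finset.range s,
        ∫ x in (b i)..(b (i+1)), normalCDF x ≤ (1/t) * normalCDF (((i:ℝ) - s)/t) := by
      intro i _
      have hstep : b i ≤ b (i+1) := by
        simp only [hbdef]
        gcongr
        push_cast
        linarith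
      have hb1 : b (i+1) = ((i:ℝ) - s)/t := by
        simp only [hbdef]; push_cast; ring_nf
      have hconst : ∫ _x in (b i)..(b (i+1)), normalCDF (((i:ℝ) - s)/t)
          = (1/t) * normalCDF (((i:ℝ) - s)/t) := by
        rw [intervalIntegral.integral_const, smul_eq_mul]
        congr 1
        simp only [hbdef]
        push_cast
        field_simp
        ring
      rw [← hconst]
      apply intervalIntegral.integral_mono_on hstep (hint i) intervalIntegrable_const
      intro x hx
      rw [← hb1]
      exact normalCDF_mono hx.2
    calc FF (-(1/t)) - FF (-(t + 1/t)) = ∫ x in (b 0)..(b s), normalCDF x := by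
          rw [integral_normalCDF, hb0, hbs]
      _ = ∑ i ∈ Finset.range s, ∫ x in (b i)..(b (i+1)), normalCDF x := hsum.symm
      _ ≤ ∑ i ∈ Finset.range s, (1/t) * normalCDF (((i:ℝ) - s)/t) :=
          Finset.sum_le_sum hterm
      _ = (1/t) * ∑ i ∈ Finset.range s, normalCDF (((i:ℝ) - s)/t) := by
          rw [Finset.mul_sum]
  · -- upper bound
    filter_upwards [eventually_ge_atTop 1] with s hs
    have hs1 : (1:ℝ) ≤ (s:ℝ) := by exact_mod_cast hs
    set t := Real.sqrt (s:ℝ) with htdef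
    have htt : t * t = (s:ℝ) := Real.mul_self_sqrt (by positivity)
    have ht : (0:ℝ) < t := Real.sqrt_pos.2 (by linarith)
    set a : ℕ → ℝ := fun i => ((i:ℝ) - s)/t with hadef
    have hint : ∀ k, IntervalIntegrable normalCDF MeasureTheory.volume (a k) (a (k+1)) :=
      fun k => normalCDF_cont.intervalIntegrable _ _
    have hsum := intervalIntegral.sum_integral_adjacent_intervals
      (a := a) (n := s) (μ := MeasureTheory.volume) (f := normalCDF) (fun k _ => hint k)
    have ha0 : a 0 = -t := by
      simp only [hadef]
      field_simp
      linear_combination htt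
    have has : a s = 0 := by
      simp only [hadef]
      simp
    have hterm : ∀ i ∈ Finset.range s,
        (1/t) * normalCDF (((i:ℝ) - s)/t) ≤ ∫ x in (a i)..(a (i+1)), normalCDF x := by
      intro i _
      have hstep : a i ≤ a (i+1) := by
        simp only [hadef]
        gcongr
        push_cast
        linarith
      have hconst : ∫ _x in (a i)..(a (i+1)), normalCDF (((i:ℝ) - s)/t)
          = (1/t) * normalCDF (((i:ℝ) - s)/t) := by
        rw [intervalIntegral.integral_const, smul_eq_mul]
        congr 1
        simp only [hadef]
        push_cast
        field_simp
        ring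
      rw [← hconst]
      apply intervalIntegral.integral_mono_on hstep intervalIntegrable_const (hint i)
      intro x hx
      exact normalCDF_mono hx.1
    calc (1/t) * ∑ i ∈ Finset.range s, normalCDF (((i:ℝ) - s)/t)
        = ∑ i ∈ Finset.range s, (1/t) * normalCDF (((i:ℝ) - s)/t) := by
          rw [Finset.mul_sum]
      _ ≤ ∑ i ∈ Finset.range s, ∫ x in (a i)..(a (i+1)), normalCDF x :=
          Finset.sum_le_sum hterm
      _ = ∫ x in (a 0)..(a s), normalCDF x := hsum
      _ = FF 0 - FF (-t) := by rw [integral_normalCDF, ha0, has]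

lemma pmf_succ (κ : ℝ) (i : ℕ) : ((i:ℝ)+1) * poissonPMF κ (i+1) = κ * poissonPMF κ i := by
  unfold poissonPMF
  rw [Nat.factorial_succ]
  have h1 : ((i.factorial : ℝ)) ≠ 0 := Nat.cast_ne_zero.2 i.factorial_ne_zero
  have h2 : ((i:ℝ)+1) ≠ 0 := by positivity
  push_cast
  field_simp
  ring

lemma sum_poissonCDF (κ : ℝ) (s : ℕ) :
    ∑ i ∈ Finset.range s, poissonCDF κ i
      = ∑ j ∈ Finset.range s, ((s:ℝ) - j) * poissonPMF κ j := by
  induction s with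
  | zero => simp
  | succ n ih =>
    have expand : ∀ j ∈ Finset.range (n+1), (((n+1:ℕ):ℝ) - j) * poissonPMF κ j
        = (((n:ℕ):ℝ) - j) * poissonPMF κ j + poissonPMF κ j := by
      intro j _; push_cast; ring
    rw [Finset.sum_range_succ, ih, poissonCDF, Finset.sum_congr rfl expand,
      Finset.sum_add_distrib, Finset.sum_range_succ (fun j => (((n:ℕ):ℝ) - j) * poissonPMF κ j),
      Finset.sum_range_succ (fun j => poissonPMF κ j)]
    push_cast
    ring

lemma sum_weighted_pmf (n : ℕ) :
    ∑ j ∈ Finset.range (n+1), ((n:ℝ) + 1 - j) * poissonPMF (n+1) j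
      = ((n:ℝ)+1) * poissonPMF (n+1) n := by
  have expand : ∀ j ∈ Finset.range (n+1), ((n:ℝ) + 1 - j) * poissonPMF (n+1) j
      = ((n:ℝ)+1) * poissonPMF (n+1) j - (j:ℝ) * poissonPMF (n+1) j := by
    intro j _; push_cast; ring
  rw [Finset.sum_congr rfl expand, Finset.sum_sub_distrib, ← Finset.mul_sum]
  have h2 : ∑ j ∈ Finset.range (n+1), (j:ℝ) * poissonPMF (n+1) j
      = ((n:ℝ)+1) * ∑ j ∈ Finset.range n, poissonPMF (n+1) j := by
    rw [Finset.sum_range_succ', Finset.mul_sum]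
    simp only [Nat.cast_zero, zero_mul, add_zero]
    refine Finset.sum_congr rfl fun i _ => ?_
    have := pmf_succ ((n:ℝ)+1) i
    push_cast at this ⊢
    linarith [this]
  rw [h2, ← mul_sub, Finset.sum_range_succ]
  ring

lemma stirling_limit :
    Tendsto (fun n : ℕ => Real.sqrt ((n:ℝ)+1) * Real.exp (-((n:ℝ)+1)) * (((n:ℝ)+1)^n / n.factorial))
      atTop (𝓝 (Real.sqrt (2*π))⁻¹) := by
  have hπ : Real.sqrt π ≠ 0 := by positivity
  have h1 : Tendsto (fun n : ℕ => (Stirling.stirlingSeq n)⁻¹) atTop (𝓝 (Real.sqrt π)⁻¹) :=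
    Stirling.tendsto_stirlingSeq_sqrt_pi.inv₀ hπ
  have h2 : Tendsto (fun n : ℕ => ((n:ℝ)+1)/(2*n)) atTop (𝓝 (1/2)) := by
    have : Tendsto (fun n : ℕ => (1 + 1/(n:ℝ))/2) atTop (𝓝 ((1+0)/2)) :=
      (tendsto_const_nhds.add tendsto_one_div_atTop_nhds_zero_nat).div_const 2
    norm_num at this
    refine this.congr' ?_
    filter_upwards [eventually_gt_atTop 0] with n hn
    have : (n:ℝ) ≠ 0 := Nat.cast_ne_zero.2 hn.ne'
    field_simp
  have h3 : Tendsto (fun n : ℕ => Real.sqrt (((n:ℝ)+1)/(2*n))) atTop (𝓝 (Real.sqrt (1/2))) :=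
    (Real.continuous_sqrt.continuousAt).tendsto.comp h2
  have h4 : Tendsto (fun n : ℕ => (1 + 1/(n:ℝ))^n) atTop (𝓝 (Real.exp 1)) :=
    Real.tendsto_one_add_div_pow_exp 1
  have hlim : Tendsto (fun n : ℕ => (Stirling.stirlingSeq n)⁻¹ *
      (Real.sqrt (((n:ℝ)+1)/(2*n)) * ((1 + 1/(n:ℝ))^n * Real.exp (-1))))
      atTop (𝓝 ((Real.sqrt π)⁻¹ * (Real.sqrt (1/2) * (Real.exp 1 * Real.exp (-1))))) :=
    h1.mul (h3.mul (h4.mul tendsto_const_nhds))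
  have hval : (Real.sqrt π)⁻¹ * (Real.sqrt (1/2) * (Real.exp 1 * Real.exp (-1)))
      = (Real.sqrt (2*π))⁻¹ := by
    rw [← Real.exp_add]
    norm_num
  rw [hval] at hlim
  refine hlim.congr' ?_
  filter_upwards [eventually_ge_atTop 1] with n hn
  have hN : (0:ℝ) < n := by exact_mod_cast hn
  have hfac : ((n.factorial : ℝ)) ≠ 0 := Nat.cast_ne_zero.2 n.factorial_ne_zero
  have hs2n : (0:ℝ) < Real.sqrt (2*n) := Real.sqrt_pos.2 (by positivity)
  rw [Stirling.stirlingSeq, inv_div, Real.sqrt_div (by positivity : (0:ℝ) ≤ (n:ℝ)+1),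
    show (1 + 1/(n:ℝ)) = ((n:ℝ)+1)/n by field_simp]
  rw [show Real.exp (-((n:ℝ)+1)) = (Real.exp 1 ^ n * Real.exp 1)⁻¹ by
      rw [← Real.exp_nat_mul, mul_one, ← Real.exp_add, ← Real.exp_neg],
    Real.exp_neg, div_pow, div_pow]
  have hexp1 : Real.exp 1 ≠ 0 := Real.exp_ne_zero _
  have hpow : ((n:ℝ))^n ≠ 0 := pow_ne_zero _ hN.ne'
  field_simp

lemma tendstoA :
    Tendsto (fun s : ℕ => (1/Real.sqrt s) * ∑ i ∈ Finset.range s, poissonCDF s i)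
      atTop (𝓝 (Real.sqrt (2*π))⁻¹) := by
  rw [← Filter.tendsto_add_atTop_iff_nat 1]
  refine stirling_limit.congr ?_
  intro n
  show Real.sqrt ((n:ℝ)+1) * Real.exp (-((n:ℝ)+1)) * (((n:ℝ)+1)^n / n.factorial)
      = (1/Real.sqrt ((n+1:ℕ))) * ∑ i ∈ Finset.range (n+1), poissonCDF ((n+1:ℕ)) i
  rw [sum_poissonCDF]
  have : ((n+1:ℕ):ℝ) = (n:ℝ)+1 := by push_cast; ring
  rw [this, sum_weighted_pmf, poissonPMF]
  have hpos : (0:ℝ) < (n:ℝ)+1 := by positivity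
  have hsq : Real.sqrt ((n:ℝ)+1) * Real.sqrt ((n:ℝ)+1) = (n:ℝ)+1 :=
    Real.mul_self_sqrt hpos.le
  have hfac : ((n.factorial : ℝ)) ≠ 0 := Nat.cast_ne_zero.2 n.factorial_ne_zero
  have hs : Real.sqrt ((n:ℝ)+1) ≠ 0 := by positivity
  rw [show (-((n:ℝ)+1)) = (-1 - (n:ℝ)) by ring]
  field_simp
  linear_combination hsq

theorem berry_esseen_errors_average_to_zero :
    Tendsto (fun s : ℕ =>
        (1 / Real.sqrt s) *
          ∑ i ∈ Finset.range s, (poissonCDF s i - normalCDF (((i : ℝ) - s) / Real.sqrt s)))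
      atTop (nhds 0) := by
  have h := tendstoA.sub tendstoB
  rw [sub_self] at h
  refine h.congr fun s => ?_
  rw [Finset.sum_sub_distrib]
  ring
end
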